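/- Any vector v ∈ [-B,B]^m (integer entries bounded in absolute value by B) can be decomposed as v = H_{m,B} · v̄ for some v̄ ∈ {-1,0,1}^{m·δ_B}, where H_{m,B} is the block-diagonal matrix with m copies of the row (B_1, ..., B_{δ_B}). -/
import Mathlib

lemma stmt7_log (B : ℕ) (h : 2 ≤ B) : Nat.log 2 B = Nat.log 2 (B / 2) + 1 := by
  have := Nat.log_div_base 2 B
  have hpos : 0 < Nat.log 2 B := Nat.log_pos one_lt_two h
  omega

lemma stmt7_shift (B x : ℕ) : (B + 2 ^ (x + 1)) / 2 ^ (x + 2) = (B / 2 + 2 ^ x) / 2 ^ (x + 1) := by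
  have h1 : (B + 2 ^ (x + 1)) / 2 = B / 2 + 2 ^ x := by
    have hp : 2 ^ (x + 1) = 2 * 2 ^ x := by ring
    omega
  calc (B + 2 ^ (x + 1)) / 2 ^ (x + 2)
      = (B + 2 ^ (x + 1)) / (2 * 2 ^ (x + 1)) := by ring_nf
    _ = (B + 2 ^ (x + 1)) / 2 / 2 ^ (x + 1) := (Nat.div_div_eq_div_mul _ _ _).symm
    _ = (B / 2 + 2 ^ x) / 2 ^ (x + 1) := by rw [h1]

lemma stmt7_aux (B : ℕ) (hB : 0 < B) (a : ℤ) (ha : |a| ≤ B) :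
    ∃ ε : ℕ → ℤ, (∀ j, ε j = -1 ∨ ε j = 0 ∨ ε j = 1) ∧
      a = ∑ j ∈ Finset.range (Nat.log 2 B + 1),
        (((B + 2 ^ j) / 2 ^ (j + 1) : ℕ) : ℤ) * ε j := by
  induction B using Nat.strong_induction_on generalizing a with
  | _ B IH =>
  rw [abs_le] at ha
  rcases le_or_gt B 1 with h1 | h1
  · have hB1 : B = 1 := by omega
    subst hB1
    refine ⟨fun _ => a, fun j => by simpa using (by omega : a = -1 ∨ a = 0 ∨ a = 1), ?_⟩
    simp
  · -- B ≥ 2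
    set b1 : ℕ := (B + 1) / 2 with hb1
    set b2 : ℕ := B / 2 with hb2
    have hsum : b1 + b2 = B := by omega
    have hb2pos : 0 < b2 := by omega
    set ε₀ : ℤ := if (b2 : ℤ) < a then 1 else if a < -(b2 : ℤ) then -1 else 0 with hε₀
    have hε₀mem : ε₀ = -1 ∨ ε₀ = 0 ∨ ε₀ = 1 := by
      rw [hε₀]; split_ifs <;> simp
    set a' : ℤ := a - ε₀ * b1 with ha'
    have ha'le : |a'| ≤ (b2 : ℤ) := by
      rw [abs_le, ha', hε₀]
      have h1' : (b1 : ℤ) + b2 = B := by exact_mod_cast hsum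
      have h2' : (b1 : ℤ) ≤ b2 + 1 := by
        have : b1 ≤ b2 + 1 := by omega
        exact_mod_cast this
      split_ifs with hcase1 hcase2 <;> constructor <;> linarith
    obtain ⟨ε', hε'mem, hε'sum⟩ := IH b2 (by omega) hb2pos a' ha'le
    refine ⟨fun j => if j = 0 then ε₀ else ε' (j - 1), fun j => by
      dsimp only
      split_ifs
      · exact hε₀mem
      · exact hε'mem _, ?_⟩
    rw [stmt7_log B (by omega)]
    rw [Finset.sum_range_succ']
    have hfirst : (((B + 2 ^ 0) / 2 ^ (0 + 1) : ℕ) : ℤ) * (if (0:ℕ) = 0 then ε₀ else ε' (0 - 1))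
        = (b1 : ℤ) * ε₀ := by
      simp [hb1]
    rw [hfirst]
    have hrest : ∀ x ∈ Finset.range (Nat.log 2 (B / 2) + 1),
        (((B + 2 ^ (x + 1)) / 2 ^ (x + 1 + 1) : ℕ) : ℤ) *
          (if x + 1 = 0 then ε₀ else ε' (x + 1 - 1))
        = (((B / 2 + 2 ^ x) / 2 ^ (x + 1) : ℕ) : ℤ) * ε' x := by
      intro x _
      rw [stmt7_shift B x]
      simp
    rw [Finset.sum_congr rfl hrest, ← hε'sum]
    rw [ha']
    ring

/-- Any vector `v ∈ [-B,B]^m` can be decomposed as `v = H_{m,B} · v̄` for some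
`v̄ ∈ {-1,0,1}^{m·δ_B}`, where `H_{m,B}` is the block-diagonal matrix with `m`
copies of the row `(B_1, …, B_{δ_B})` (stated blockwise). -/
theorem stmt7 (B m : ℕ) (hB : 0 < B) (v : Fin m → ℤ) (hv : ∀ i, |v i| ≤ (B : ℤ)) :
    ∃ vbar : Fin m → Fin (Nat.log 2 B + 1) → ℤ,
      (∀ i j, vbar i j = -1 ∨ vbar i j = 0 ∨ vbar i j = 1) ∧
      ∀ i, v i = ∑ j : Fin (Nat.log 2 B + 1), (((B + 2 ^ (j : ℕ)) / 2 ^ ((j : ℕ) + 1) : ℕ) : ℤ) * vbar i j := by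
  choose ε hεmem hεsum using fun i => stmt7_aux B hB (v i) (hv i)
  refine ⟨fun i j => ε i (j : ℕ), fun i j => hεmem i _, fun i => ?_⟩
  rw [hεsum i, ← Fin.sum_univ_eq_sum_range (fun j => (((B + 2 ^ j) / 2 ^ (j + 1) : ℕ) : ℤ) * ε i j)]
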